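/- Let X be a connected chordal bipartite graph, let α be a vertex of X, and let (Ω,S) be a coherent configuration on the vertex set Ω of X compatible with X in which α is distinguished. Let Δ and Γ be distinct fibers of (Ω,S) such that at least one edge of X joins Δ to Γ. Then there exist integers a,b ≥ 1 such that every connected component C of the subgraph of X induced by Δ ∪ Γ satisfies |C∩Δ| = a, |C∩Γ| = b, and every vertex of C∩Δ is adjacent to every vertex of C∩Γ; moreover, the number of connected components of this induced subgraph equals ‖e_{Δ,Γ}‖. In other words, the induced subgraph is isomorphic to mK_{a,b} with m = ‖e_{Δ,Γ}‖. -/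
import Mathlib


open SimpleGraph

/-- A coherent configuration on a set `Ω`: a partition `S` of `Ω × Ω` into nonempty
binary relations such that the diagonal is a union of elements of `S`, the converse of
every element of `S` belongs to `S`, and the intersection numbers are well defined. -/
structure CoherentConfiguration (Ω : Type*) where
  S : Set (Set (Ω × Ω))
  nonempty_mem : ∀ s ∈ S, s.Nonempty
  partition : ∀ p : Ω × Ω, ∃! s, s ∈ S ∧ p ∈ s
  diag_union : ∀ s ∈ S, (∃ p ∈ s, p.1 = p.2) → ∀ p ∈ s, p.1 = p.2
  converse_mem : ∀ s ∈ S, {p : Ω × Ω | (p.2, p.1) ∈ s} ∈ S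
  regularity : ∀ r ∈ S, ∀ s ∈ S, ∀ t ∈ S, ∀ p ∈ t, ∀ q ∈ t,
    {γ : Ω | (p.1, γ) ∈ r ∧ (γ, p.2) ∈ s}.ncard =
      {γ : Ω | (q.1, γ) ∈ r ∧ (γ, q.2) ∈ s}.ncard

/-- `Δ` is a fiber of the coherent configuration, i.e. `{(δ,δ) : δ ∈ Δ} ∈ S`. -/
def CoherentConfiguration.IsFiber {Ω : Type*} (C : CoherentConfiguration Ω)
    (Δ : Set Ω) : Prop :=
  {p : Ω × Ω | p.1 = p.2 ∧ p.1 ∈ Δ} ∈ C.S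

/-- The coherent configuration is compatible with the graph `X`: the arc set of `X`
is a union of elements of `S`. -/
def CoherentConfiguration.Compatible {Ω : Type*} (C : CoherentConfiguration Ω)
    (X : SimpleGraph Ω) : Prop :=
  ∀ s ∈ C.S, (∃ p ∈ s, X.Adj p.1 p.2) → ∀ p ∈ s, X.Adj p.1 p.2

/-- The vertex `α` is distinguished in the coherent configuration: `{(α,α)} ∈ S`. -/
def CoherentConfiguration.Distinguished {Ω : Type*} (C : CoherentConfiguration Ω)
    (α : Ω) : Prop :=
  ({(α, α)} : Set (Ω × Ω)) ∈ C.S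

/-- `P`, `Q` form a bipartition of the graph `X`. -/
def IsBipartition {V : Type*} (X : SimpleGraph V) (P Q : Set V) : Prop :=
  (∀ v, v ∈ P ∨ v ∈ Q) ∧ Disjoint P Q ∧
    ∀ u v, X.Adj u v → (u ∈ P ∧ v ∈ Q) ∨ (u ∈ Q ∧ v ∈ P)

/-- `X` contains no induced cycle of length at least 6. -/
def NoLongInducedCycle {V : Type*} (X : SimpleGraph V) : Prop :=
  ∀ n : ℕ, 6 ≤ n → IsEmpty (SimpleGraph.cycleGraph n ↪g X)

/-- The equivalence relation `e_{Δ,Γ}` on `Δ`: two vertices of `Δ` are equivalent iff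
they have the same neighbors in `Γ`; viewed as a set of pairs. -/
def eRel {V : Type*} (X : SimpleGraph V) (Δ Γ : Set V) : Set (V × V) :=
  {p | p.1 ∈ Δ ∧ p.2 ∈ Δ ∧ X.neighborSet p.1 ∩ Γ = X.neighborSet p.2 ∩ Γ}

/-- The number `‖e_{Δ,Γ}‖` of classes of the equivalence relation `e_{Δ,Γ}`,
i.e. the number of distinct sets of the form `N(δ) ∩ Γ` for `δ ∈ Δ`. -/
noncomputable def numClasses {V : Type*} (X : SimpleGraph V) (Δ Γ : Set V) : ℕ :=
  ((fun δ => X.neighborSet δ ∩ Γ) '' Δ).ncard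

namespace CCProof

variable {Ω : Type*} [Fintype Ω]

lemma basis_unique (C : CoherentConfiguration Ω) {s s' : Set (Ω × Ω)}
    (hs : s ∈ C.S) (hs' : s' ∈ C.S) {p : Ω × Ω} (hp : p ∈ s) (hp' : p ∈ s') : s = s' := by
  obtain ⟨t, _, ht⟩ := C.partition p
  rw [ht s ⟨hs, hp⟩, ht s' ⟨hs', hp'⟩]

lemma exists_basis (C : CoherentConfiguration Ω) (p : Ω × Ω) : ∃ s ∈ C.S, p ∈ s := by
  obtain ⟨s, hs, -⟩ := C.partition p
  exact ⟨s, hs.1, hs.2⟩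

/-- positivity transfer along a basis relation -/
lemma reg_nonempty (C : CoherentConfiguration Ω) {r s t : Set (Ω × Ω)}
    (hr : r ∈ C.S) (hs : s ∈ C.S) (ht : t ∈ C.S) {p q : Ω × Ω} (hp : p ∈ t) (hq : q ∈ t)
    (h : {γ : Ω | (p.1, γ) ∈ r ∧ (γ, p.2) ∈ s}.Nonempty) :
    {γ : Ω | (q.1, γ) ∈ r ∧ (γ, q.2) ∈ s}.Nonempty := by
  have h1 := C.regularity r hr s hs t ht p hp q hq
  have h2 : 0 < {γ : Ω | (p.1, γ) ∈ r ∧ (γ, p.2) ∈ s}.ncard :=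
    (Set.ncard_pos (Set.toFinite _)).mpr h
  rw [h1] at h2
  exact (Set.ncard_pos (Set.toFinite _)).mp h2

/-- A relation is *coherent* if it is a union of basis relations. -/
def Coh (C : CoherentConfiguration Ω) (R : Set (Ω × Ω)) : Prop :=
  ∀ s ∈ C.S, (s ∩ R).Nonempty → s ⊆ R

lemma Coh.compl {C : CoherentConfiguration Ω} {R : Set (Ω × Ω)} (h : Coh C R) :
    Coh C Rᶜ := by
  intro s hs ⟨p, hp, hpR⟩ q hq
  intro hqR
  exact hpR (h s hs ⟨q, hq, hqR⟩ hp)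

lemma Coh.inter {C : CoherentConfiguration Ω} {R R' : Set (Ω × Ω)} (h : Coh C R)
    (h' : Coh C R') : Coh C (R ∩ R') := by
  intro s hs ⟨p, hp, hpR, hpR'⟩ q hq
  exact ⟨h s hs ⟨p, hp, hpR⟩ hq, h' s hs ⟨p, hp, hpR'⟩ hq⟩

lemma Coh.union {C : CoherentConfiguration Ω} {ι : Sort*} {R : ι → Set (Ω × Ω)}
    (h : ∀ i, Coh C (R i)) : Coh C (⋃ i, R i) := by
  intro s hs ⟨p, hp, hpR⟩ q hq
  obtain ⟨Ri, ⟨i, rfl⟩, hpRi⟩ := hpR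
  exact Set.mem_iUnion.mpr ⟨i, h i s hs ⟨p, hp, hpRi⟩ hq⟩

lemma Coh.union2 {C : CoherentConfiguration Ω} {R R' : Set (Ω × Ω)} (h : Coh C R)
    (h' : Coh C R') : Coh C (R ∪ R') := by
  intro s hs ⟨p, hp, hpR⟩ q hq
  rcases hpR with hpR | hpR
  · exact Or.inl (h s hs ⟨p, hp, hpR⟩ hq)
  · exact Or.inr (h' s hs ⟨p, hp, hpR⟩ hq)

/-- diagonal is coherent -/
lemma coh_diag (C : CoherentConfiguration Ω) : Coh C {p : Ω × Ω | p.1 = p.2} := by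
  intro s hs ⟨p, hp, hpd⟩ q hq
  exact C.diag_union s hs ⟨p, hp, hpd⟩ q hq

/-- composition of coherent relations is coherent -/
lemma Coh.comp {C : CoherentConfiguration Ω} {R R' : Set (Ω × Ω)} (h : Coh C R)
    (h' : Coh C R') :
    Coh C {p : Ω × Ω | ∃ γ, (p.1, γ) ∈ R ∧ (γ, p.2) ∈ R'} := by
  intro s hs ⟨p, hp, γ, hγ1, hγ2⟩ q hq
  obtain ⟨r, hr, hpr⟩ := exists_basis C (p.1, γ)
  obtain ⟨r', hr', hpr'⟩ := exists_basis C (γ, p.2)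
  have hrR : r ⊆ R := h r hr ⟨(p.1, γ), hpr, hγ1⟩
  have hrR' : r' ⊆ R' := h' r' hr' ⟨(γ, p.2), hpr', hγ2⟩
  have := reg_nonempty C hr hr' hs hp hq ⟨γ, hpr, hpr'⟩
  obtain ⟨γ', hγ'1, hγ'2⟩ := this
  exact ⟨γ', hrR hγ'1, hrR' hγ'2⟩

end CCProof

namespace CCProof2
open CCProof

variable {Ω : Type*} [Fintype Ω]

lemma fiber_nonempty (C : CoherentConfiguration Ω) {Δ : Set Ω} (hΔ : C.IsFiber Δ) :
    Δ.Nonempty := by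
  obtain ⟨p, hp1, hp2⟩ := C.nonempty_mem _ hΔ
  exact ⟨p.1, hp2⟩

lemma fiber_eq_of_mem (C : CoherentConfiguration Ω) {Δ Γ : Set Ω} (hΔ : C.IsFiber Δ)
    (hΓ : C.IsFiber Γ) {ω : Ω} (h1 : ω ∈ Δ) (h2 : ω ∈ Γ) : Δ = Γ := by
  have := basis_unique C hΔ hΓ (p := (ω, ω)) ⟨rfl, h1⟩ ⟨rfl, h2⟩
  ext δ
  constructor
  · intro hδ
    have : ((δ : Ω), δ) ∈ {p : Ω × Ω | p.1 = p.2 ∧ p.1 ∈ Γ} := this ▸ ⟨rfl, hδ⟩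
    exact this.2
  · intro hδ
    have : ((δ : Ω), δ) ∈ {p : Ω × Ω | p.1 = p.2 ∧ p.1 ∈ Δ} := this.symm ▸ ⟨rfl, hδ⟩
    exact this.2

lemma basis_alpha_sub (C : CoherentConfiguration Ω) {α : Ω} (hdist : C.Distinguished α)
    {Δ : Set Ω} (hΔ : C.IsFiber Δ) {s : Set (Ω × Ω)} (hs : s ∈ C.S)
    {β : Ω} (hβ : β ∈ Δ) (hαβ : (α, β) ∈ s) :
    s ⊆ {p : Ω × Ω | p.1 = α ∧ p.2 ∈ Δ} := by
  intro ⟨x, y⟩ hxy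
  have hx : x = α := by
    have := reg_nonempty C hdist hs hs (p := (α, β)) (q := (x, y)) hαβ hxy
      ⟨α, rfl, hαβ⟩
    obtain ⟨γ, hγ1, -⟩ := this
    have : x = α ∧ γ = α := Prod.mk.injEq .. ▸ hγ1
    exact this.1
  refine ⟨hx, ?_⟩
  have := reg_nonempty C hs hΔ hs (p := (α, β)) (q := (x, y)) hαβ hxy
    ⟨β, hαβ, rfl, hβ⟩
  obtain ⟨γ, hγ1, hγ2, hγ3⟩ := this
  exact hγ2 ▸ hγ3

lemma alpha_fiber_mem (C : CoherentConfiguration Ω) {α : Ω} (hdist : C.Distinguished α)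
    {Δ : Set Ω} (hΔ : C.IsFiber Δ) :
    {p : Ω × Ω | p.1 = α ∧ p.2 ∈ Δ} ∈ C.S := by
  obtain ⟨β0, hβ0⟩ := fiber_nonempty C hΔ
  obtain ⟨s, hs, hαβ0⟩ := exists_basis C (α, β0)
  have hsub := basis_alpha_sub C hdist hΔ hs hβ0 hαβ0
  have hsup : {p : Ω × Ω | p.1 = α ∧ p.2 ∈ Δ} ⊆ s := by
    rintro ⟨x, β'⟩ ⟨hx, hβ'⟩
    have hconv : {p : Ω × Ω | (p.2, p.1) ∈ s} ∈ C.S := C.converse_mem s hs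
    have := reg_nonempty C hconv hs hΔ (p := (β0, β0)) (q := (β', β'))
      ⟨rfl, hβ0⟩ ⟨rfl, hβ'⟩ ⟨α, hαβ0, hαβ0⟩
    obtain ⟨γ, hγ1, hγ2⟩ := this
    have := hsub hγ2
    have hγα : γ = α := this.1
    have : ((α : Ω), β') ∈ s := hγα ▸ hγ2
    have hx' : x = α := hx
    exact hx'.symm ▸ this
  exact (le_antisymm hsub hsup) ▸ hs

end CCProof2

namespace CCProof3
open CCProof CCProof2

variable {Ω : Type*} [Fintype Ω]

lemma ncard_biUnion {ι : Type*} (F : Finset ι) (f : ι → Set Ω)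
    (hdisj : ∀ i ∈ F, ∀ j ∈ F, i ≠ j → Disjoint (f i) (f j)) :
    (⋃ i ∈ F, f i).ncard = ∑ i ∈ F, (f i).ncard := by
  classical
  induction F using Finset.induction_on with
  | empty => simp
  | @insert a F ha ih =>
    rw [Finset.set_biUnion_insert, Finset.sum_insert ha,
      ← ih (fun i hi j hj hij => hdisj _ (Finset.mem_insert_of_mem hi) _
        (Finset.mem_insert_of_mem hj) hij)]
    apply Set.ncard_union_eq _ (Set.toFinite _) (Set.toFinite _)
    rw [Set.disjoint_iUnion₂_right]
    intro i hi
    exact hdisj _ (Finset.mem_insert_self a F) _ (Finset.mem_insert_of_mem hi)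
      (fun h => ha (h ▸ hi))

lemma GR1 (C : CoherentConfiguration Ω) {R : Set (Ω × Ω)} (hR : Coh C R)
    {s t : Set (Ω × Ω)} (hs : s ∈ C.S) (ht : t ∈ C.S) {p q : Ω × Ω} (hp : p ∈ t) (hq : q ∈ t) :
    {γ : Ω | (p.1, γ) ∈ R ∧ (γ, p.2) ∈ s}.ncard
      = {γ : Ω | (q.1, γ) ∈ R ∧ (γ, q.2) ∈ s}.ncard := by
  classical
  have hSfin : C.S.Finite := Set.toFinite _
  set F : Finset (Set (Ω × Ω)) := hSfin.toFinset.filter (fun r => r ⊆ R) with hF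
  have hmemF : ∀ r, r ∈ F ↔ r ∈ C.S ∧ r ⊆ R := by
    intro r
    rw [hF, Finset.mem_filter, Set.Finite.mem_toFinset]
  have key : ∀ x : Ω × Ω, {γ : Ω | (x.1, γ) ∈ R ∧ (γ, x.2) ∈ s}
      = ⋃ r ∈ F, {γ : Ω | (x.1, γ) ∈ r ∧ (γ, x.2) ∈ s} := by
    intro x
    ext γ
    simp only [Set.mem_setOf_eq, Set.mem_iUnion, exists_prop]
    constructor
    · rintro ⟨h1, h2⟩
      obtain ⟨r, hr, hxr⟩ := exists_basis C (x.1, γ)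
      exact ⟨r, (hmemF r).mpr ⟨hr, hR r hr ⟨_, hxr, h1⟩⟩, hxr, h2⟩
    · rintro ⟨r, hr, h1, h2⟩
      exact ⟨((hmemF r).mp hr).2 h1, h2⟩
  have hdisj : ∀ x : Ω × Ω, ∀ r ∈ F, ∀ r' ∈ F, r ≠ r' →
      Disjoint {γ : Ω | (x.1, γ) ∈ r ∧ (γ, x.2) ∈ s}
        {γ : Ω | (x.1, γ) ∈ r' ∧ (γ, x.2) ∈ s} := by
    intro x r hr r' hr' hne
    rw [Set.disjoint_left]
    rintro γ ⟨h1, _⟩ ⟨h1', _⟩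
    exact hne (basis_unique C ((hmemF r).mp hr).1 ((hmemF r').mp hr').1 h1 h1')
  rw [key p, key q, ncard_biUnion _ _ (hdisj p), ncard_biUnion _ _ (hdisj q)]
  apply Finset.sum_congr rfl
  intro r hr
  exact C.regularity r ((hmemF r).mp hr).1 s hs t ht p hp q hq

/-- the arc set is coherent -/
lemma coh_arcs (C : CoherentConfiguration Ω) {X : SimpleGraph Ω}
    (hcomp : C.Compatible X) : Coh C {p : Ω × Ω | X.Adj p.1 p.2} := by
  intro s hs ⟨p, hp, hpD⟩ q hq
  exact hcomp s hs ⟨p, hp, hpD⟩ q hq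

/-- degree constancy on fibers -/
lemma deg_const (C : CoherentConfiguration Ω) {X : SimpleGraph Ω}
    (hcomp : C.Compatible X) {α : Ω} (hdist : C.Distinguished α)
    {Δ Γ : Set Ω} (hΔ : C.IsFiber Δ) (hΓ : C.IsFiber Γ)
    {δ δ' : Ω} (hδ : δ ∈ Δ) (hδ' : δ' ∈ Δ) :
    (X.neighborSet δ ∩ Γ).ncard = (X.neighborSet δ' ∩ Γ).ncard := by
  have hαΔ := alpha_fiber_mem C hdist hΔ
  have hαΓ := alpha_fiber_mem C hdist hΓ
  have ht : {p : Ω × Ω | (p.2, p.1) ∈ {p : Ω × Ω | p.1 = α ∧ p.2 ∈ Δ}} ∈ C.S :=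
    C.converse_mem _ hαΔ
  have hs : {p : Ω × Ω | (p.2, p.1) ∈ {p : Ω × Ω | p.1 = α ∧ p.2 ∈ Γ}} ∈ C.S :=
    C.converse_mem _ hαΓ
  have hset : ∀ x : Ω, X.neighborSet x ∩ Γ
      = {γ : Ω | ((x, α).1, γ) ∈ {p : Ω × Ω | X.Adj p.1 p.2}
          ∧ (γ, (x, α).2) ∈ {p : Ω × Ω | (p.2, p.1) ∈ {p : Ω × Ω | p.1 = α ∧ p.2 ∈ Γ}}} := by
    intro x
    ext γ
    simp only [Set.mem_inter_iff, mem_neighborSet, Set.mem_setOf_eq]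
    tauto
  rw [hset δ, hset δ']
  exact GR1 C (coh_arcs C hcomp) hs ht (p := (δ, α)) (q := (δ', α)) ⟨rfl, hδ⟩ ⟨rfl, hδ'⟩

end CCProof3

namespace CCProof4
open CCProof CCProof2 CCProof3

variable {Ω : Type*} [Fintype Ω]

lemma exists_penult {X : SimpleGraph Ω} (hconn : X.Connected) {u v : Ω}
    (w : X.Walk u v) (h : w.length ≠ 0) :
    ∃ γ, X.Adj γ v ∧ X.dist u γ + 1 ≤ w.length := by
  induction w with
  | nil => simp at h
  | @cons u x v h' w' ih =>
    by_cases h0 : w'.length = 0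
    · have hxv : x = v := SimpleGraph.Walk.eq_of_length_eq_zero h0
      subst hxv
      exact ⟨u, h', by simp [SimpleGraph.dist_self]⟩
    · obtain ⟨γ, hγ1, hγ2⟩ := ih h0
      refine ⟨γ, hγ1, ?_⟩
      have h3 : X.dist u γ ≤ X.dist u x + X.dist x γ := hconn.dist_triangle
      have h4 : X.dist u x ≤ 1 := by
        rw [SimpleGraph.dist_eq_one_iff_adj.mpr h']
      simp only [SimpleGraph.Walk.length_cons]
      omega

lemma coh_distLE (C : CoherentConfiguration Ω) {X : SimpleGraph Ω}
    (hcomp : C.Compatible X) (hconn : X.Connected) (k : ℕ) :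
    Coh C {p : Ω × Ω | X.dist p.1 p.2 ≤ k} := by
  induction k with
  | zero =>
    have : {p : Ω × Ω | X.dist p.1 p.2 ≤ 0} = {p : Ω × Ω | p.1 = p.2} := by
      ext p
      simp only [Set.mem_setOf_eq, Nat.le_zero]
      exact hconn.dist_eq_zero_iff
    rw [this]
    exact coh_diag C
  | succ k ih =>
    have hco : Coh C {p : Ω × Ω | ∃ γ, (p.1, γ) ∈ {p : Ω × Ω | X.dist p.1 p.2 ≤ k}
        ∧ (γ, p.2) ∈ ({p : Ω × Ω | p.1 = p.2} ∪ {p : Ω × Ω | X.Adj p.1 p.2})} :=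
      Coh.comp ih (Coh.union2 (coh_diag C) (coh_arcs C hcomp))
    have heq : {p : Ω × Ω | X.dist p.1 p.2 ≤ k + 1}
        = {p : Ω × Ω | ∃ γ, (p.1, γ) ∈ {p : Ω × Ω | X.dist p.1 p.2 ≤ k}
        ∧ (γ, p.2) ∈ ({p : Ω × Ω | p.1 = p.2} ∪ {p : Ω × Ω | X.Adj p.1 p.2})} := by
      ext ⟨p1, p2⟩
      simp only [Set.mem_setOf_eq, Set.mem_union]
      constructor
      · intro hp
        obtain ⟨w, hw⟩ := (hconn p1 p2).exists_walk_length_eq_dist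
        by_cases h0 : w.length = 0
        · exact ⟨p2, by omega, Or.inl rfl⟩
        · obtain ⟨γ, hγ1, hγ2⟩ := exists_penult hconn w h0
          exact ⟨γ, by omega, Or.inr hγ1⟩
      · rintro ⟨γ, h1, h2 | h2⟩
        · have h2' : γ = p2 := h2
          have h1' : X.dist p1 p2 ≤ k := h2' ▸ h1
          omega

        · have := hconn.dist_triangle (u := p1) (v := γ) (w := p2)
          have h1' : X.dist p1 γ ≤ k := h1
          have h3 : X.dist γ p2 ≤ 1 := by
            rw [SimpleGraph.dist_eq_one_iff_adj.mpr h2]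
          omega
    rw [heq]
    exact hco

lemma dist_const_on_fiber (C : CoherentConfiguration Ω) {X : SimpleGraph Ω}
    (hcomp : C.Compatible X) (hconn : X.Connected) {α : Ω} (hdist : C.Distinguished α)
    {Δ : Set Ω} (hΔ : C.IsFiber Δ) {β β' : Ω} (hβ : β ∈ Δ) (hβ' : β' ∈ Δ) :
    X.dist α β = X.dist α β' := by
  have hαΔ := alpha_fiber_mem C hdist hΔ
  have key : ∀ b b' : Ω, b ∈ Δ → b' ∈ Δ → X.dist α b' ≤ X.dist α b := by
    intro b b' hb hb'
    have hcoh := coh_distLE C hcomp hconn (X.dist α b)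
    have hsub := hcoh _ hαΔ ⟨(α, b), ⟨rfl, hb⟩, by simp⟩
    exact hsub (a := (α, b')) ⟨rfl, hb'⟩
  exact le_antisymm (key β' β hβ' hβ) (key β β' hβ hβ')

lemma walk_parity {X : SimpleGraph Ω} {P Q : Set Ω} (hbip : IsBipartition X P Q) :
    ∀ {u v : Ω} (w : X.Walk u v), Even w.length ↔ (u ∈ P ↔ v ∈ P) := by
  intro u v w
  induction w with
  | nil => simp
  | @cons u x v h' w' ih =>
    have hux : u ∈ P ↔ ¬(x ∈ P) := by
      rcases hbip.2.2 u x h' with ⟨h1, h2⟩ | ⟨h1, h2⟩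
      · exact ⟨fun _ => Set.disjoint_right.mp hbip.2.1 h2, fun _ => h1⟩
      · constructor
        · intro hu
          exact absurd hu (Set.disjoint_right.mp hbip.2.1 h1)
        · intro hx
          rcases hbip.1 x with h | h
          · exact absurd h hx
          · exact absurd h2 (fun h2 => hx (False.elim (Set.disjoint_right.mp hbip.2.1 h h2)))
    rw [SimpleGraph.Walk.length_cons, Nat.even_add_one, ih]
    tauto

end CCProof4

namespace CCProof5
open CCProof CCProof2 CCProof3 CCProof4

lemma fin_sub_val {n : ℕ} (u v : Fin n) :
    (u - v).val = if v.val ≤ u.val then u.val - v.val else u.val + n - v.val := by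
  have hu := u.isLt
  have hv := v.isLt
  rw [Fin.sub_def]
  simp only
  split
  · next h =>
    have he : n - v.val + u.val = n + (u.val - v.val) := by omega
    rw [he, Nat.add_mod_left, Nat.mod_eq_of_lt (by omega)]
  · next h =>
    rw [Nat.mod_eq_of_lt (by omega)]
    omega

lemma cycle_adj_val {n : ℕ} (hn : 3 ≤ n) (u v : Fin n) :
    (cycleGraph n).Adj u v ↔
      (u.val + 1 = v.val ∨ v.val + 1 = u.val ∨ (u.val = 0 ∧ v.val = n - 1)
        ∨ (v.val = 0 ∧ u.val = n - 1)) := by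
  have hu := u.isLt
  have hv := v.isLt
  rw [SimpleGraph.cycleGraph_adj']
  rw [fin_sub_val, fin_sub_val]
  split <;> split <;> omega

lemma no_induced_cycle_fn {Ω : Type*} {X : SimpleGraph Ω} (hchordal : NoLongInducedCycle X)
    {n : ℕ} (hn : 6 ≤ n) (c : Fin n → Ω) (hinj : Function.Injective c)
    (hadj : ∀ a b : Fin n, X.Adj (c a) (c b) ↔ (cycleGraph n).Adj a b) : False :=
  (hchordal n hn).false ⟨⟨c, hinj⟩, hadj _ _⟩

section Core

variable {Ω : Type*} [Fintype Ω] {X : SimpleGraph Ω}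

lemma extend_core {m : ℕ} (hm : 3 ≤ m) (f : ℕ → Ω) {SA SB : Set Ω}
    (hSBind : ∀ x ∈ SB, ∀ y ∈ SB, ¬X.Adj x y)
    (hdeg : ∀ x ∈ SA, ∀ y ∈ SA,
      (X.neighborSet x ∩ SB).ncard = (X.neighborSet y ∩ SB).ncard)
    (hsideA : ∀ i ≤ m, Even (m - i) → f i ∈ SA)
    (hsideB : ∀ i ≤ m, ¬Even (m - i) → f i ∈ SB)
    (hedge : ∀ i, i < m → X.Adj (f i) (f (i+1)))
    (hnon : ∀ i j, i + 2 ≤ j → j ≤ m → ¬X.Adj (f i) (f j))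
    (hinj : ∀ i ≤ m, ∀ j ≤ m, f i = f j → i = j)
    (hchordal : NoLongInducedCycle X) :
    ∃ w ∈ X.neighborSet (f m) ∩ SB, ∀ i ≤ m - 1, ¬X.Adj (f i) w := by
  classical
  by_contra hcon
  push_neg at hcon
  -- every candidate w is adjacent to f(m-2)
  have hsub : X.neighborSet (f m) ∩ SB ⊆ X.neighborSet (f (m-2)) ∩ SB := by
    rintro w ⟨hw1, hw2⟩
    obtain ⟨i₀, hi₀m, hi₀⟩ := hcon w ⟨hw1, hw2⟩
    -- indices adjacent to w have even gap to m
    have hgap : ∀ i ≤ m, X.Adj (f i) w → Even (m - i) := by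
      intro i him hadj
      by_contra hodd
      exact hSBind _ (hsideB i him hodd) _ hw2 hadj
    have hi₀2 : i₀ ≤ m - 2 := by
      have := hgap i₀ (by omega) hi₀
      rcases this with ⟨k, hk⟩
      omega
    set P : ℕ → Prop := fun i => X.Adj (f i) w with hP
    set i' := Nat.findGreatest P (m - 2) with hi'
    have hPi' : P i' := Nat.findGreatest_spec hi₀2 hi₀
    have hi'le : i' ≤ m - 2 := Nat.findGreatest_le _
    have hi'max : ∀ k, i' < k → k ≤ m - 2 → ¬P k := fun k h1 h2 =>
      Nat.findGreatest_is_greatest h1 h2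
    -- show i' = m - 2, otherwise we build a long induced cycle
    by_cases hcase : i' = m - 2
    · exact ⟨hcase ▸ hPi', hw2⟩
    exfalso
    have hi'lt : i' < m - 2 := lt_of_le_of_ne hi'le hcase
    have hEi' : Even (m - i') := hgap i' (by omega) hPi'
    have hgap4 : i' + 4 ≤ m := by
      rcases hEi' with ⟨k, hk⟩
      omega
    set n := m - i' + 2 with hn
    have hn6 : 6 ≤ n := by omega
    set c : Fin n → Ω := fun a => if a.val = 0 then w else f (i' + a.val - 1) with hc
    -- basic facts
    have hwne : ∀ l, i' ≤ l → l ≤ m → w ≠ f l := by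
      intro l hl1 hl2 heq
      rcases Nat.lt_or_ge l (m-1) with h | h
      · exact hnon l m (by omega) (le_refl m) (heq ▸ hw1.symm)
      · rcases Nat.eq_or_lt_of_le h with h' | h'
        · -- l = m - 1 : Adj (f i') w = Adj (f i') (f (m-1))
          have : X.Adj (f i') (f (m-1)) := by
            rw [← h']  at heq
            exact heq ▸ hPi'
          exact hnon i' (m-1) (by omega) (by omega) this
        · have hlm : l = m := by omega
          subst hlm
          exact X.irrefl (heq ▸ hw1.symm)
    have hcinj : Function.Injective c := by
      intro a b hab
      have ha := a.isLt
      have hb := b.isLt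
      rw [hc] at hab
      simp only at hab
      by_cases ha0 : a.val = 0 <;> by_cases hb0 : b.val = 0
      · exact Fin.ext (by omega)
      · rw [if_pos ha0, if_neg hb0] at hab
        exact absurd hab (hwne _ (by omega) (by omega))
      · rw [if_neg ha0, if_pos hb0] at hab
        exact absurd hab.symm (hwne _ (by omega) (by omega))
      · rw [if_neg ha0, if_neg hb0] at hab
        have := hinj _ (by omega : i' + a.val - 1 ≤ m) _ (by omega : i' + b.val - 1 ≤ m) hab
        exact Fin.ext (by omega)
    -- adjacency of w to path vertices
    have hwadj : ∀ l, i' ≤ l → l ≤ m → (X.Adj w (f l) ↔ (l = i' ∨ l = m)) := by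
      intro l hl1 hl2
      constructor
      · intro hadj
        by_contra hne
        push_neg at hne
        rcases Nat.lt_or_ge l (m-1) with h | h
        · exact hi'max l (by omega) (by omega) hadj.symm
        · have hl' : l = m - 1 := by omega
          subst hl'
          have : ¬Even (m - (m-1)) := by
            intro ⟨k, hk⟩; omega
          exact hSBind _ hw2 _ (hsideB (m-1) (by omega) this) hadj
      · rintro (rfl | rfl)
        · exact hPi'.symm
        · exact hw1.symm
    -- the adjacency iff for the cycle
    have hadjiff : ∀ a b : Fin n, X.Adj (c a) (c b) ↔ (cycleGraph n).Adj a b := by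
      intro a b
      have ha := a.isLt
      have hb := b.isLt
      rw [cycle_adj_val (by omega)]
      rw [hc]
      simp only
      have hpath : ∀ (la lb : ℕ), i' ≤ la → la ≤ m → i' ≤ lb → lb ≤ m →
          (X.Adj (f la) (f lb) ↔ (la + 1 = lb ∨ lb + 1 = la)) := by
        intro la lb h1 h2 h3 h4
        constructor
        · intro hadj
          by_contra hne
          push_neg at hne
          rcases Nat.lt_trichotomy la lb with h | h | h
          · exact hnon la lb (by omega) (by omega) hadj
          · exact X.irrefl (h ▸ hadj)
          · exact hnon lb la (by omega) (by omega) hadj.symm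
        · rintro (rfl | h)
          · exact hedge la (by omega)
          · exact (h ▸ hedge lb (by omega)).symm
      by_cases ha0 : a.val = 0 <;> by_cases hb0 : b.val = 0
      · rw [if_pos ha0, if_pos hb0]
        simp only [X.irrefl, false_iff]
        omega
      · rw [if_pos ha0, if_neg hb0]
        rw [hwadj _ (by omega) (by omega)]
        omega
      · rw [if_neg ha0, if_pos hb0]
        constructor
        · intro h
          have := (hwadj _ (by omega) (by omega)).mp h.symm
          omega
        · intro h
          have : i' + a.val - 1 = i' ∨ i' + a.val - 1 = m := by omega
          exact ((hwadj _ (by omega) (by omega)).mpr this).symm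
      · rw [if_neg ha0, if_neg hb0]
        rw [hpath _ _ (by omega) (by omega) (by omega) (by omega)]
        omega
    exact no_induced_cycle_fn hchordal hn6 c hcinj hadjiff
  -- now conclude
  have hA1 : f m ∈ SA := hsideA m (le_refl m) (by simp)
  have hA2 : f (m-2) ∈ SA := hsideA (m-2) (by omega) ⟨1, by omega⟩
  have heq : X.neighborSet (f m) ∩ SB = X.neighborSet (f (m-2)) ∩ SB :=
    Set.eq_of_subset_of_ncard_le hsub (le_of_eq (hdeg _ hA2 _ hA1)) (Set.toFinite _)
  have hm3B : f (m-3) ∈ SB := hsideB (m-3) (by omega) (by intro ⟨k, hk⟩; omega)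
  have hm3adj : X.Adj (f (m-3)) (f (m-2)) := by
    have := hedge (m-3) (by omega)
    have h32 : m - 3 + 1 = m - 2 := by omega
    exact h32 ▸ this
  have : f (m-3) ∈ X.neighborSet (f m) ∩ SB := by
    rw [heq]
    exact ⟨hm3adj.symm, hm3B⟩
  exact hnon (m-3) m (by omega) (le_refl m) this.1.symm

end Core

section GPsec

variable {Ω : Type*} [Fintype Ω] (X : SimpleGraph Ω) (A B : Set Ω)

def GP (m : ℕ) (f : ℕ → Ω) : Prop :=
  (∀ i ≤ m, Even i → f i ∈ A) ∧ (∀ i ≤ m, ¬Even i → f i ∈ B) ∧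
  (∀ i, i < m → X.Adj (f i) (f (i+1))) ∧
  (∀ i j, i + 2 ≤ j → j ≤ m → ¬X.Adj (f i) (f j))

variable {X A B}

lemma GP.inj {m : ℕ} {f : ℕ → Ω} (hGP : GP X A B m f) (hm : 3 ≤ m) :
    ∀ i ≤ m, ∀ j ≤ m, f i = f j → i = j := by
  obtain ⟨-, -, hedge, hnon⟩ := hGP
  have key : ∀ i j, i < j → j ≤ m → f i = f j → False := by
    intro i j hij hjm heq
    rcases Nat.eq_or_lt_of_le hij with h1 | h1
    · have hadj := hedge i (by omega)
      have h1' : i + 1 = j := h1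
      rw [h1', ← heq] at hadj
      exact X.irrefl hadj
    · rcases Nat.lt_or_ge j m with h2 | h2
      · exact hnon i (j+1) (by omega) (by omega) (heq ▸ hedge j (by omega))
      · have hjm' : j = m := by omega
        rw [hjm'] at heq
        rcases Nat.eq_zero_or_pos i with h3 | h3
        · rw [h3] at heq
          exact hnon 1 m (by omega) (le_refl m) (heq ▸ hedge 0 (by omega)).symm
        · have hadj := hedge (i-1) (by omega)
          have hi1 : i - 1 + 1 = i := by omega
          rw [hi1] at hadj
          exact hnon (i-1) m (by omega) (le_refl m) (heq ▸ hadj)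
  intro i hi j hj heq
  rcases Nat.lt_trichotomy i j with h | h | h
  · exact absurd (key i j h hj heq) id
  · exact h
  · exact absurd (key j i h hi heq.symm) id

lemma GP.extend {m : ℕ} {f : ℕ → Ω} (hGP : GP X A B m f) (hm : 3 ≤ m)
    (hA : ∀ x ∈ A, ∀ y ∈ A, ¬X.Adj x y) (hB : ∀ x ∈ B, ∀ y ∈ B, ¬X.Adj x y)
    (hdegA : ∀ x ∈ A, ∀ y ∈ A, (X.neighborSet x ∩ B).ncard = (X.neighborSet y ∩ B).ncard)
    (hdegB : ∀ x ∈ B, ∀ y ∈ B, (X.neighborSet x ∩ A).ncard = (X.neighborSet y ∩ A).ncard)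
    (hchordal : NoLongInducedCycle X) :
    ∃ f', GP X A B (m+1) f' := by
  obtain ⟨hsA, hsB, hedge, hnon⟩ := hGP
  have hinj := GP.inj ⟨hsA, hsB, hedge, hnon⟩ hm
  have main : ∃ w ∈ X.neighborSet (f m) ∩ (if Even m then B else A),
      ∀ i ≤ m - 1, ¬X.Adj (f i) w := by
    rcases Nat.even_or_odd m with hme | hmo
    · rw [if_pos hme]
      refine extend_core hm f hB hdegA ?_ ?_ hedge hnon hinj hchordal
      · intro i him hev
        refine hsA i him ?_
        have := (Nat.even_sub him).mp hev
        tauto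
      · intro i him hev
        refine hsB i him ?_
        have := (Nat.even_sub him).not.mp hev
        tauto
    · have hme : ¬Even m := Nat.not_even_iff_odd.mpr hmo
      rw [if_neg hme]
      refine extend_core hm f hA hdegB ?_ ?_ hedge hnon hinj hchordal
      · intro i him hev
        refine hsB i him ?_
        have := (Nat.even_sub him).mp hev
        tauto
      · intro i him hev
        refine hsA i him ?_
        have := (Nat.even_sub him).not.mp hev
        tauto
  obtain ⟨w, ⟨hw1, hw2⟩, hwnon⟩ := main
  refine ⟨fun k => if k = m+1 then w else f k, ?_, ?_, ?_, ?_⟩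
  · intro i him hev
    show (if i = m + 1 then w else f i) ∈ A
    by_cases hi : i = m + 1
    · rw [if_pos hi]
      subst hi
      have hmo : ¬Even m := by
        rcases Nat.even_or_odd m with h | h
        · exact absurd hev (by simpa [Nat.even_add_one] using h)
        · exact Nat.not_even_iff_odd.mpr h
      rw [if_neg hmo] at hw2
      exact hw2
    · rw [if_neg hi]
      exact hsA i (by omega) hev
  · intro i him hev
    show (if i = m + 1 then w else f i) ∈ B
    by_cases hi : i = m + 1
    · rw [if_pos hi]
      subst hi
      have hme : Even m := by
        rcases Nat.even_or_odd m with h | h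
        · exact h
        · exact absurd (by simpa [Nat.even_add_one] using Nat.not_even_iff_odd.mpr h) hev
      rw [if_pos hme] at hw2
      exact hw2
    · rw [if_neg hi]
      exact hsB i (by omega) hev
  · intro i hilt
    show X.Adj (if i = m + 1 then w else f i) (if i + 1 = m + 1 then w else f (i+1))
    by_cases hi : i = m
    · subst hi
      rw [if_neg (by omega), if_pos rfl]
      exact hw1
    · rw [if_neg (by omega), if_neg (by omega)]
      exact hedge i (by omega)
  · intro i j hij hjm
    show ¬ X.Adj (if i = m + 1 then w else f i) (if j = m + 1 then w else f j)
    by_cases hj : j = m + 1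
    · subst hj
      rw [if_neg (by omega), if_pos rfl]
      exact hwnon i (by omega)
    · rw [if_neg (by omega), if_neg (by omega)]
      exact hnon i j hij (by omega)

end GPsec

section Final

variable {Ω : Type*} [Fintype Ω] {X : SimpleGraph Ω} {A B : Set Ω}

lemma no_GP3 (hA : ∀ x ∈ A, ∀ y ∈ A, ¬X.Adj x y) (hB : ∀ x ∈ B, ∀ y ∈ B, ¬X.Adj x y)
    (hdegA : ∀ x ∈ A, ∀ y ∈ A, (X.neighborSet x ∩ B).ncard = (X.neighborSet y ∩ B).ncard)
    (hdegB : ∀ x ∈ B, ∀ y ∈ B, (X.neighborSet x ∩ A).ncard = (X.neighborSet y ∩ A).ncard)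
    (hchordal : NoLongInducedCycle X) :
    ¬ ∃ f, GP X A B 3 f := by
  rintro ⟨f, hf⟩
  have hall : ∀ m, 3 ≤ m → ∃ f, GP X A B m f := by
    intro m hm
    induction m with
    | zero => omega
    | succ k ih =>
      rcases Nat.lt_or_ge k 3 with h | h
      · have hk : k + 1 = 3 := by omega
        exact hk ▸ ⟨f, hf⟩
      · obtain ⟨g, hg⟩ := ih h
        exact hg.extend h hA hB hdegA hdegB hchordal
  obtain ⟨g, hg⟩ := hall (Fintype.card Ω + 3) (by omega)
  have hinj := hg.inj (by omega)
  have : Function.Injective (fun i : Fin (Fintype.card Ω + 1) => g i.val) := by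
    intro a b hab
    exact Fin.ext (hinj a.val (by omega) b.val (by omega) hab)
  have := Fintype.card_le_of_injective _ this
  simp only [Fintype.card_fin] at this
  omega

lemma shares_eq (hA : ∀ x ∈ A, ∀ y ∈ A, ¬X.Adj x y) (hB : ∀ x ∈ B, ∀ y ∈ B, ¬X.Adj x y)
    (hdegA : ∀ x ∈ A, ∀ y ∈ A, (X.neighborSet x ∩ B).ncard = (X.neighborSet y ∩ B).ncard)
    (hdegB : ∀ x ∈ B, ∀ y ∈ B, (X.neighborSet x ∩ A).ncard = (X.neighborSet y ∩ A).ncard)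
    (hchordal : NoLongInducedCycle X) {d1 d2 g1 g2 : Ω}
    (hd1 : d1 ∈ A) (hd2 : d2 ∈ A) (hg1 : g1 ∈ B) (hg2 : g2 ∈ B)
    (h11 : X.Adj d1 g1) (h21 : X.Adj d2 g1) (h22 : X.Adj d2 g2) : X.Adj d1 g2 := by
  by_contra hne
  apply no_GP3 hA hB hdegA hdegB hchordal
  refine ⟨fun k => if k = 0 then d1 else if k = 1 then g1 else if k = 2 then d2 else g2,
    ?_, ?_, ?_, ?_⟩
  · intro i hi hev
    interval_cases i
    · exact hd1
    · exact absurd hev (by simp)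
    · exact hd2
    · exact absurd hev (by decide)
  · intro i hi hev
    interval_cases i
    · exact absurd (Even.zero) hev
    · exact hg1
    · exact absurd (by decide : Even 2) hev
    · exact hg2
  · intro i hi
    interval_cases i
    · simpa using h11
    · simpa using h21.symm
    · simpa using h22
  · intro i j hij hj
    have h2 : (i = 0 ∧ j = 2) ∨ (i = 0 ∧ j = 3) ∨ (i = 1 ∧ j = 3) := by omega
    rcases h2 with ⟨rfl, rfl⟩ | ⟨rfl, rfl⟩ | ⟨rfl, rfl⟩
    · simpa using hA d1 hd1 d2 hd2
    · simpa using hne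
    · simpa using hB g1 hg1 g2 hg2

end Final

end CCProof5

namespace CCProof6
open CCProof CCProof2 CCProof3 CCProof4 CCProof5

variable {Ω : Type*} [Fintype Ω]

lemma adj_flip {X : SimpleGraph Ω} {P Q : Set Ω} (hbip : IsBipartition X P Q)
    {u v : Ω} (h : X.Adj u v) : u ∈ P ↔ ¬(v ∈ P) := by
  rcases hbip.2.2 u v h with ⟨h1, h2⟩ | ⟨h1, h2⟩
  · exact ⟨fun _ => Set.disjoint_right.mp hbip.2.1 h2, fun _ => h1⟩
  · constructor
    · intro hu
      exact absurd hu (Set.disjoint_right.mp hbip.2.1 h1)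
    · intro hv
      exact absurd h2 hv

lemma fiber_not_adj (C : CoherentConfiguration Ω) {X : SimpleGraph Ω} {P Q : Set Ω}
    (hconn : X.Connected) (hbip : IsBipartition X P Q) (hcomp : C.Compatible X)
    {α : Ω} (hdist : C.Distinguished α) {Δ : Set Ω} (hΔ : C.IsFiber Δ)
    {δ δ' : Ω} (hδ : δ ∈ Δ) (hδ' : δ' ∈ Δ) : ¬X.Adj δ δ' := by
  intro hadj
  have hk := dist_const_on_fiber C hcomp hconn hdist hΔ hδ hδ'
  obtain ⟨w1, hw1⟩ := (hconn α δ).exists_walk_length_eq_dist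
  obtain ⟨w2, hw2⟩ := (hconn α δ').exists_walk_length_eq_dist
  have e1 := walk_parity hbip w1
  have e2 := walk_parity hbip w2
  rw [hw1] at e1
  rw [hw2, ← hk] at e2
  have hflip := adj_flip hbip hadj
  tauto

end CCProof6

open CCProof CCProof2 CCProof3 CCProof4 CCProof5 CCProof6 in
theorem stmt_7 {Ω : Type*} [Fintype Ω] (X : SimpleGraph Ω) (P Q : Set Ω)
    (hconn : X.Connected) (hbip : IsBipartition X P Q) (hchordal : NoLongInducedCycle X)
    (α : Ω) (C : CoherentConfiguration Ω)
    (hcomp : C.Compatible X) (hdist : C.Distinguished α)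
    (Δ Γ : Set Ω) (hΔ : C.IsFiber Δ) (hΓ : C.IsFiber Γ) (hne : Δ ≠ Γ)
    (hedge : ∃ u ∈ Δ, ∃ v ∈ Γ, X.Adj u v) :
    ∃ a b : ℕ, 1 ≤ a ∧ 1 ≤ b ∧
      (∀ K : (X.induce (Δ ∪ Γ)).ConnectedComponent,
        {v : ↥(Δ ∪ Γ) | v ∈ K.supp ∧ (v : Ω) ∈ Δ}.ncard = a ∧
        {v : ↥(Δ ∪ Γ) | v ∈ K.supp ∧ (v : Ω) ∈ Γ}.ncard = b ∧
        ∀ u ∈ K.supp, ∀ v ∈ K.supp, (u : Ω) ∈ Δ → (v : Ω) ∈ Γ → X.Adj u v) ∧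
      Nat.card (X.induce (Δ ∪ Γ)).ConnectedComponent = numClasses X Δ Γ := by
  classical
  obtain ⟨δs, hδs, γs, hγs, hadjs⟩ := hedge
  have hDind : ∀ u ∈ Δ, ∀ v ∈ Δ, ¬X.Adj u v := fun u hu v hv =>
    fiber_not_adj C hconn hbip hcomp hdist hΔ hu hv
  have hGind : ∀ u ∈ Γ, ∀ v ∈ Γ, ¬X.Adj u v := fun u hu v hv =>
    fiber_not_adj C hconn hbip hcomp hdist hΓ hu hv
  have hdegΔ : ∀ x ∈ Δ, ∀ y ∈ Δ,
      (X.neighborSet x ∩ Γ).ncard = (X.neighborSet y ∩ Γ).ncard :=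
    fun x hx y hy => deg_const C hcomp hdist hΔ hΓ hx hy
  have hdegΓ : ∀ x ∈ Γ, ∀ y ∈ Γ,
      (X.neighborSet x ∩ Δ).ncard = (X.neighborSet y ∩ Δ).ncard :=
    fun x hx y hy => deg_const C hcomp hdist hΓ hΔ hx hy
  have hDG : ∀ x : Ω, x ∈ Δ → x ∈ Γ → False := fun x h1 h2 =>
    hne (fiber_eq_of_mem C hΔ hΓ h1 h2)
  have hM3Δ : ∀ d1 ∈ Δ, ∀ d2 ∈ Δ, ∀ g ∈ Γ, X.Adj d1 g → X.Adj d2 g →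
      X.neighborSet d1 ∩ Γ = X.neighborSet d2 ∩ Γ := by
    intro d1 h1 d2 h2 g hg ha1 ha2
    ext x
    simp only [Set.mem_inter_iff, SimpleGraph.mem_neighborSet]
    constructor
    · rintro ⟨hx1, hx2⟩
      exact ⟨shares_eq hDind hGind hdegΔ hdegΓ hchordal h2 h1 hg hx2 ha2 ha1 hx1, hx2⟩
    · rintro ⟨hx1, hx2⟩
      exact ⟨shares_eq hDind hGind hdegΔ hdegΓ hchordal h1 h2 hg hx2 ha1 ha2 hx1, hx2⟩
  have hM3Γ : ∀ g1 ∈ Γ, ∀ g2 ∈ Γ, ∀ d ∈ Δ, X.Adj g1 d → X.Adj g2 d →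
      X.neighborSet g1 ∩ Δ = X.neighborSet g2 ∩ Δ := by
    intro g1 h1 g2 h2 d hd ha1 ha2
    ext x
    simp only [Set.mem_inter_iff, SimpleGraph.mem_neighborSet]
    constructor
    · rintro ⟨hx1, hx2⟩
      exact ⟨shares_eq hGind hDind hdegΓ hdegΔ hchordal h2 h1 hd hx2 ha2 ha1 hx1, hx2⟩
    · rintro ⟨hx1, hx2⟩
      exact ⟨shares_eq hGind hDind hdegΓ hdegΔ hchordal h1 h2 hd hx2 ha1 ha2 hx1, hx2⟩
  set Y := X.induce (Δ ∪ Γ) with hY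
  have KEY0 : ∀ (u v : ↥(Δ ∪ Γ)) (_ : Y.Walk u v),
      ((u : Ω) ∈ Δ → (((v : Ω) ∈ Δ →
          X.neighborSet (u : Ω) ∩ Γ = X.neighborSet (v : Ω) ∩ Γ) ∧
        ((v : Ω) ∈ Γ → X.Adj (u : Ω) (v : Ω)))) ∧
      ((u : Ω) ∈ Γ → (((v : Ω) ∈ Γ →
          X.neighborSet (u : Ω) ∩ Δ = X.neighborSet (v : Ω) ∩ Δ) ∧
        ((v : Ω) ∈ Δ → X.Adj (u : Ω) (v : Ω)))) := by
    intro u v w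
    induction w with
    | nil =>
      refine ⟨fun hu => ⟨fun _ => rfl, fun hv => (hDG _ hu hv).elim⟩,
        fun hu => ⟨fun _ => rfl, fun hv => (hDG _ hv hu).elim⟩⟩
    | @cons u x v h w ih =>
      have hXadj : X.Adj (u : Ω) (x : Ω) := h
      constructor
      · intro hu
        have hxΓ : (x : Ω) ∈ Γ := by
          rcases x.2 with hh | hh
          · exact absurd hXadj (hDind _ hu _ hh)
          · exact hh
        constructor
        · intro hvΔ
          have hxv := (ih.2 hxΓ).2 hvΔ
          exact hM3Δ _ hu _ hvΔ _ hxΓ hXadj hxv.symm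
        · intro hvΓ
          have heq := (ih.2 hxΓ).1 hvΓ
          have hmem : (u : Ω) ∈ X.neighborSet (x : Ω) ∩ Δ := ⟨hXadj.symm, hu⟩
          rw [heq] at hmem
          exact hmem.1.symm
      · intro hu
        have hxΔ : (x : Ω) ∈ Δ := by
          rcases x.2 with hh | hh
          · exact hh
          · exact absurd hXadj (hGind _ hu _ hh)
        constructor
        · intro hvΓ
          have hxv := (ih.1 hxΔ).2 hvΓ
          exact hM3Γ _ hu _ hvΓ _ hxΔ hXadj hxv.symm
        · intro hvΔ
          have heq := (ih.1 hxΔ).1 hvΔ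
          have hmem : (u : Ω) ∈ X.neighborSet (x : Ω) ∩ Γ := ⟨hXadj.symm, hu⟩
          rw [heq] at hmem
          exact hmem.1.symm
  have KEY : ∀ (u v : ↥(Δ ∪ Γ)), Y.Reachable u v →
      ((u : Ω) ∈ Δ → (((v : Ω) ∈ Δ →
          X.neighborSet (u : Ω) ∩ Γ = X.neighborSet (v : Ω) ∩ Γ) ∧
        ((v : Ω) ∈ Γ → X.Adj (u : Ω) (v : Ω)))) ∧
      ((u : Ω) ∈ Γ → (((v : Ω) ∈ Γ →
          X.neighborSet (u : Ω) ∩ Δ = X.neighborSet (v : Ω) ∩ Δ) ∧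
        ((v : Ω) ∈ Δ → X.Adj (u : Ω) (v : Ω)))) := by
    intro u v hr
    obtain ⟨w⟩ := hr
    exact KEY0 u v w
  have hsupp_reach : ∀ (K : Y.ConnectedComponent) (u v : ↥(Δ ∪ Γ)),
      u ∈ K.supp → v ∈ K.supp → Y.Reachable u v := by
    intro K u v hu hv
    rw [SimpleGraph.ConnectedComponent.mem_supp_iff] at hu hv
    exact SimpleGraph.ConnectedComponent.eq.mp (hu.trans hv.symm)
  have hmemsupp : ∀ (u v : ↥(Δ ∪ Γ)), Y.Adj u v → ∀ K : Y.ConnectedComponent,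
      u ∈ K.supp → v ∈ K.supp := by
    intro u v huv K hu
    rw [SimpleGraph.ConnectedComponent.mem_supp_iff] at hu ⊢
    rw [← hu]
    exact SimpleGraph.ConnectedComponent.eq.mpr huv.reachable.symm
  have hexδ : ∀ K : Y.ConnectedComponent, ∃ u, u ∈ K.supp ∧ (u : Ω) ∈ Δ := by
    intro K
    obtain ⟨v0, hv0⟩ := K.exists_rep
    have hv0supp : v0 ∈ K.supp := by
      rw [SimpleGraph.ConnectedComponent.mem_supp_iff]; exact hv0
    rcases v0.2 with hh | hh
    · exact ⟨v0, hv0supp, hh⟩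
    · have hpos : 0 < (X.neighborSet (v0 : Ω) ∩ Δ).ncard := by
        rw [hdegΓ _ hh _ hγs]
        exact (Set.ncard_pos (Set.toFinite _)).mpr ⟨δs, hadjs.symm, hδs⟩
      obtain ⟨x, hx1, hx2⟩ := (Set.ncard_pos (Set.toFinite _)).mp hpos
      refine ⟨⟨x, Or.inl hx2⟩, ?_, hx2⟩
      exact hmemsupp v0 ⟨x, Or.inl hx2⟩ hx1 K hv0supp
  have hexγ : ∀ K : Y.ConnectedComponent, ∃ u, u ∈ K.supp ∧ (u : Ω) ∈ Γ := by
    intro K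
    obtain ⟨v0, hv0⟩ := K.exists_rep
    have hv0supp : v0 ∈ K.supp := by
      rw [SimpleGraph.ConnectedComponent.mem_supp_iff]; exact hv0
    rcases v0.2 with hh | hh
    · have hpos : 0 < (X.neighborSet (v0 : Ω) ∩ Γ).ncard := by
        rw [hdegΔ _ hh _ hδs]
        exact (Set.ncard_pos (Set.toFinite _)).mpr ⟨γs, hadjs, hγs⟩
      obtain ⟨x, hx1, hx2⟩ := (Set.ncard_pos (Set.toFinite _)).mp hpos
      refine ⟨⟨x, Or.inr hx2⟩, ?_, hx2⟩
      exact hmemsupp v0 ⟨x, Or.inr hx2⟩ hx1 K hv0supp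
    · exact ⟨v0, hv0supp, hh⟩
  have hKΓ : ∀ (K : Y.ConnectedComponent) (u : ↥(Δ ∪ Γ)), u ∈ K.supp → (u : Ω) ∈ Δ →
      Subtype.val '' {v : ↥(Δ ∪ Γ) | v ∈ K.supp ∧ (v : Ω) ∈ Γ}
        = X.neighborSet (u : Ω) ∩ Γ := by
    intro K u hu huΔ
    ext x
    constructor
    · rintro ⟨v, ⟨hv1, hv2⟩, rfl⟩
      exact ⟨((KEY u v (hsupp_reach K u v hu hv1)).1 huΔ).2 hv2, hv2⟩
    · rintro ⟨hx1, hx2⟩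
      exact ⟨⟨x, Or.inr hx2⟩, ⟨hmemsupp u ⟨x, Or.inr hx2⟩ hx1 K hu, hx2⟩, rfl⟩
  have hKΔ : ∀ (K : Y.ConnectedComponent) (u : ↥(Δ ∪ Γ)), u ∈ K.supp → (u : Ω) ∈ Γ →
      Subtype.val '' {v : ↥(Δ ∪ Γ) | v ∈ K.supp ∧ (v : Ω) ∈ Δ}
        = X.neighborSet (u : Ω) ∩ Δ := by
    intro K u hu huΓ
    ext x
    constructor
    · rintro ⟨v, ⟨hv1, hv2⟩, rfl⟩
      exact ⟨((KEY u v (hsupp_reach K u v hu hv1)).2 huΓ).2 hv2, hv2⟩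
    · rintro ⟨hx1, hx2⟩
      exact ⟨⟨x, Or.inl hx2⟩, ⟨hmemsupp u ⟨x, Or.inl hx2⟩ hx1 K hu, hx2⟩, rfl⟩
  refine ⟨(X.neighborSet γs ∩ Δ).ncard, (X.neighborSet δs ∩ Γ).ncard, ?_, ?_, ?_, ?_⟩
  · exact (Set.ncard_pos (Set.toFinite _)).mpr ⟨δs, hadjs.symm, hδs⟩
  · exact (Set.ncard_pos (Set.toFinite _)).mpr ⟨γs, hadjs, hγs⟩
  · intro K
    obtain ⟨u, hu, huΔ⟩ := hexδ K
    obtain ⟨v, hv, hvΓ⟩ := hexγ K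
    refine ⟨?_, ?_, ?_⟩
    · calc {w : ↥(Δ ∪ Γ) | w ∈ K.supp ∧ (w : Ω) ∈ Δ}.ncard
          = (Subtype.val '' {w : ↥(Δ ∪ Γ) | w ∈ K.supp ∧ (w : Ω) ∈ Δ}).ncard :=
            (Set.ncard_image_of_injective _ Subtype.val_injective).symm
        _ = (X.neighborSet (v : Ω) ∩ Δ).ncard := by rw [hKΔ K v hv hvΓ]
        _ = (X.neighborSet γs ∩ Δ).ncard := hdegΓ _ hvΓ _ hγs
    · calc {w : ↥(Δ ∪ Γ) | w ∈ K.supp ∧ (w : Ω) ∈ Γ}.ncard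
          = (Subtype.val '' {w : ↥(Δ ∪ Γ) | w ∈ K.supp ∧ (w : Ω) ∈ Γ}).ncard :=
            (Set.ncard_image_of_injective _ Subtype.val_injective).symm
        _ = (X.neighborSet (u : Ω) ∩ Γ).ncard := by rw [hKΓ K u hu huΔ]
        _ = (X.neighborSet δs ∩ Γ).ncard := hdegΔ _ huΔ _ hδs
    · intro p hp q hq hpΔ hqΓ
      exact ((KEY p q (hsupp_reach K p q hp hq)).1 hpΔ).2 hqΓ
  · set F : Y.ConnectedComponent → Set Ω :=
      fun K => Subtype.val '' {v : ↥(Δ ∪ Γ) | v ∈ K.supp ∧ (v : Ω) ∈ Γ} with hF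
    have hrange : Set.range F = (fun δ => X.neighborSet δ ∩ Γ) '' Δ := by
      ext s
      constructor
      · rintro ⟨K, rfl⟩
        obtain ⟨u, hu, huΔ⟩ := hexδ K
        exact ⟨(u : Ω), huΔ, (hKΓ K u hu huΔ).symm⟩
      · rintro ⟨δ, hδ, rfl⟩
        have hsupp : (⟨δ, Or.inl hδ⟩ : ↥(Δ ∪ Γ))
            ∈ (Y.connectedComponentMk ⟨δ, Or.inl hδ⟩).supp := by
          rw [SimpleGraph.ConnectedComponent.mem_supp_iff]
        exact ⟨Y.connectedComponentMk ⟨δ, Or.inl hδ⟩, hKΓ _ _ hsupp hδ⟩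
    have hFinj : Function.Injective F := by
      intro K K' hKK'
      obtain ⟨v, hv, hvΓ⟩ := hexγ K
      have hvF : (v : Ω) ∈ F K := ⟨v, ⟨hv, hvΓ⟩, rfl⟩
      rw [hKK'] at hvF
      obtain ⟨v', ⟨hv'1, -⟩, hval⟩ := hvF
      have hvv : v' = v := Subtype.ext hval
      rw [hvv] at hv'1
      rw [SimpleGraph.ConnectedComponent.mem_supp_iff] at hv hv'1
      rw [← hv, ← hv'1]
    calc Nat.card Y.ConnectedComponent
        = (Set.univ : Set Y.ConnectedComponent).ncard := (Set.ncard_univ _).symm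
      _ = (F '' Set.univ).ncard := (Set.ncard_image_of_injective _ hFinj).symm
      _ = (Set.range F).ncard := by rw [Set.image_univ]
      _ = numClasses X Δ Γ := by rw [hrange]; rfl
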